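/- Assume the harmonic potential φ(t) = t²/2 and a κ-regular mesh for some κ ≥ 1. Let F: X_h → ℝ be any linear functional, let ū_h ∈ X_h be the unique solution of the exact constrained equations Σ_k h_k Ū'_k V'_k = F[v_h] for all v_h ∈ X_h, and let u_h ∈ X_h be the unique solution of the non-local QC equations Σ_k h_k (1 + ω̂_k) U'_k V'_k = F[v_h] for all v_h ∈ X_h, where ω̂_k = (h_{k−1} − 2h_k + h_{k+1})/(4h_k). Define a = ½ Σ_k h_k ω̂_k Ū'_k and ρ(ū_h) = (Σ_k h_k (ω̂_k Ū'_k − a)²)^{1/2}. Then ½(1 + κ⁻¹) ‖ū_h' − u_h'‖_{L²} ≤ ρ(ū_h) ≤ ½(1 + κ) ‖ū_h' − u_h'‖_{L²}, where ‖w‖_{L²}² = Σ_k h_k w_k² for 2K-periodic piecewise constant functions; i.e. the deviation of the node-based QC solution from the best approximation is bounded above and below by the variational crime ρ(ū_h). -/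

import Mathlib

/-- `v : ℤ → ℝ` belongs to the coarse space `X_h`. -/
def IsCoarse (N : ℤ) (ε : ℝ) (L : ℤ → ℤ) (v : ℤ → ℝ) : Prop :=
  (∀ l : ℤ, v (l + 2 * N) = v l) ∧ v 0 = 0 ∧
    ∀ k l : ℤ, L (k - 1) ≤ l → l ≤ L k →
      v l = v (L (k - 1)) +
        ε * ((l - L (k - 1) : ℤ) : ℝ) *
          ((v (L k) - v (L (k - 1))) / (ε * ((L k - L (k - 1) : ℤ) : ℝ)))

private lemma IsCoarse_sub (N : ℤ) (ε : ℝ) (L : ℤ → ℤ) (f g : ℤ → ℝ)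
    (hf : IsCoarse N ε L f) (hg : IsCoarse N ε L g) :
    IsCoarse N ε L (fun l => f l - g l) := by
  obtain ⟨hf1, hf2, hf3⟩ := hf
  obtain ⟨hg1, hg2, hg3⟩ := hg
  refine ⟨fun l => by dsimp only; rw [hf1 l, hg1 l], by dsimp only; rw [hf2, hg2]; ring, ?_⟩
  intro k l h1 h2
  dsimp only
  rw [hf3 k l h1 h2, hg3 k l h1 h2]
  ring


private lemma sum_step_top (g : ℤ → ℝ) (a b : ℤ) (h : a ≤ b) :
    ∑ j ∈ Finset.Icc a b, g j = (∑ j ∈ Finset.Icc a (b-1), g j) + g b := by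
  have he : Finset.Icc a b = insert b (Finset.Icc a (b-1)) := by
    ext x; simp only [Finset.mem_Icc, Finset.mem_insert]; omega
  rw [he, Finset.sum_insert (by simp only [Finset.mem_Icc]; omega)]
  ring

private lemma sum_step_bot (g : ℤ → ℝ) (a b : ℤ) (h : a ≤ b) :
    ∑ j ∈ Finset.Icc a b, g j = g a + ∑ j ∈ Finset.Icc (a+1) b, g j := by
  have he : Finset.Icc a b = insert a (Finset.Icc (a+1) b) := by
    ext x; simp only [Finset.mem_Icc, Finset.mem_insert]; omega
  rw [he, Finset.sum_insert (by simp only [Finset.mem_Icc]; omega)]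

private lemma sum_split (g : ℤ → ℝ) (a b c : ℤ) (h1 : a ≤ b) (h2 : b ≤ c) :
    ∑ j ∈ Finset.Icc a c, g j = (∑ j ∈ Finset.Icc a b, g j) + ∑ j ∈ Finset.Icc (b+1) c, g j := by
  have he : Finset.Icc a c = Finset.Icc a b ∪ Finset.Icc (b+1) c := by
    ext x; simp only [Finset.mem_Icc, Finset.mem_union]; omega
  rw [he, Finset.sum_union]
  rw [Finset.disjoint_left]
  intro x hx hx'
  simp only [Finset.mem_Icc] at hx hx'
  omega

private lemma tele (f : ℤ → ℝ) (a b : ℤ) (hab : a ≤ b) :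
    ∑ k ∈ Finset.Icc (a+1) b, (f k - f (k-1)) = f b - f a := by
  refine Int.le_induction (m := a)
    (motive := fun b _ => ∑ k ∈ Finset.Icc (a+1) b, (f k - f (k-1)) = f b - f a) ?_ ?_ b hab
  · show ∑ k ∈ Finset.Icc (a+1) a, (f k - f (k-1)) = f a - f a
    rw [Finset.Icc_eq_empty (by omega)]
    simp
  · intro n hn ih
    show ∑ k ∈ Finset.Icc (a+1) (n+1), (f k - f (k-1)) = f (n+1) - f a
    rw [sum_step_top _ _ _ (by omega), show n + 1 - 1 = n from by ring, ih]
    ring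

private lemma int_const (f : ℤ → ℝ) (h : ∀ k : ℤ, f (k+1) = f k) : ∀ m n : ℤ, f m = f n := by
  have h0 : ∀ k : ℤ, f k = f 0 := by
    intro k
    induction k using Int.induction_on with
    | zero => rfl
    | succ n ih => rw [h]; exact ih
    | pred n ih =>
        have h2 := h (-(n:ℤ) - 1)
        rw [show (-(n:ℤ) - 1 + 1) = -(n:ℤ) from by ring] at h2
        rw [← h2]
        exact ih
  intro m n; rw [h0 m, h0 n]

private lemma smono_bounds (L : ℤ → ℤ) (h : StrictMono L) :
    ∀ k : ℤ, (0 ≤ k → L 0 + k ≤ L k) ∧ (k ≤ 0 → L k ≤ L 0 + k) := by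
  intro k
  induction k using Int.induction_on with
  | zero => omega
  | succ n ih =>
      have hlt : L (n:ℤ) < L ((n:ℤ)+1) := h (by omega)
      constructor
      · intro _; have := ih.1 (by omega); omega
      · intro hc; omega
  | pred n ih =>
      have hlt : L (-(n:ℤ)-1) < L (-(n:ℤ)) := h (by omega)
      constructor
      · intro hc; omega
      · intro _; have := ih.2 (by omega)
        omega

private lemma cs_sum (s : Finset ℤ) (h f g : ℤ → ℝ) (hh : ∀ k ∈ s, 0 ≤ h k) :
    ∑ k ∈ s, h k * (f k * g k) ≤
      Real.sqrt (∑ k ∈ s, h k * (f k)^2) * Real.sqrt (∑ k ∈ s, h k * (g k)^2) := by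
  have h1 : ∑ k ∈ s, h k * (f k * g k)
      = ∑ k ∈ s, (Real.sqrt (h k) * f k) * (Real.sqrt (h k) * g k) := by
    refine Finset.sum_congr rfl fun k hk => ?_
    rw [show (Real.sqrt (h k) * f k) * (Real.sqrt (h k) * g k)
        = (Real.sqrt (h k) * Real.sqrt (h k)) * (f k * g k) from by ring,
      Real.mul_self_sqrt (hh k hk)]
  have h2 : ∑ k ∈ s, h k * (f k)^2 = ∑ k ∈ s, (Real.sqrt (h k) * f k)^2 := by
    refine Finset.sum_congr rfl fun k hk => ?_
    rw [mul_pow, Real.sq_sqrt (hh k hk)]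
  have h3 : ∑ k ∈ s, h k * (g k)^2 = ∑ k ∈ s, (Real.sqrt (h k) * g k)^2 := by
    refine Finset.sum_congr rfl fun k hk => ?_
    rw [mul_pow, Real.sq_sqrt (hh k hk)]
  rw [h1, h2, h3]
  have hcs := Finset.sum_mul_sq_le_sq_mul_sq s (fun k => Real.sqrt (h k) * f k)
    (fun k => Real.sqrt (h k) * g k)
  calc ∑ k ∈ s, (Real.sqrt (h k) * f k) * (Real.sqrt (h k) * g k)
      ≤ |∑ k ∈ s, (Real.sqrt (h k) * f k) * (Real.sqrt (h k) * g k)| := le_abs_self _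
    _ = Real.sqrt ((∑ k ∈ s, (Real.sqrt (h k) * f k) * (Real.sqrt (h k) * g k))^2) :=
        (Real.sqrt_sq_eq_abs _).symm
    _ ≤ Real.sqrt ((∑ k ∈ s, (Real.sqrt (h k) * f k)^2) * ∑ k ∈ s, (Real.sqrt (h k) * g k)^2) :=
        Real.sqrt_le_sqrt hcs
    _ = _ := Real.sqrt_mul (Finset.sum_nonneg fun k _ => sq_nonneg _) _

set_option maxHeartbeats 1600000 in
/-- for the harmonic potential on a κ-regular mesh, the deviation
of the non-local QC solution `u_h` from the best approximation `ū_h` is bounded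
above and below by the variational crime `ρ(ū_h)`:
`½(1+κ⁻¹)‖ū_h' − u_h'‖ ≤ ρ(ū_h) ≤ ½(1+κ)‖ū_h' − u_h'‖`. -/
theorem statement10
    (N K : ℤ) (hN : 1 ≤ N) (hK : 1 ≤ K)
    (ε : ℝ) (hε : ε = (N : ℝ)⁻¹)
    (L : ℤ → ℤ) (hmono : StrictMono L) (hL0 : L 0 = 0)
    (hLper : ∀ k : ℤ, L (k + 2 * K) = L k + 2 * N)
    (hsz : ℤ → ℝ) (hhsz : ∀ k : ℤ, hsz k = ε * ((L k - L (k - 1) : ℤ) : ℝ))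
    (κ : ℝ) (hκ : 1 ≤ κ)
    (hreg : ∀ k : ℤ, κ⁻¹ * hsz (k - 1) ≤ hsz k ∧ hsz k ≤ κ * hsz (k - 1))
    (oh : ℤ → ℝ)
    (hoh : ∀ k : ℤ, oh k = (hsz (k - 1) - 2 * hsz k + hsz (k + 1)) / (4 * hsz k))
    (F : (ℤ → ℝ) → ℝ)
    (ub u : ℤ → ℝ) (hub : IsCoarse N ε L ub) (hu : IsCoarse N ε L u)
    (Ubp : ℤ → ℝ) (hUbp : ∀ k : ℤ, Ubp k = (ub (L k) - ub (L (k - 1))) / hsz k)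
    (Up : ℤ → ℝ) (hUp : ∀ k : ℤ, Up k = (u (L k) - u (L (k - 1))) / hsz k)
    -- `ū_h` solves the exact constrained equations
    (hexact : ∀ v : ℤ → ℝ, IsCoarse N ε L v →
      ∑ k ∈ Finset.Icc (-K + 1) K,
        hsz k * (Ubp k * ((v (L k) - v (L (k - 1))) / hsz k)) = F v)
    -- `u_h` solves the non-local QC equations
    (hqc : ∀ v : ℤ → ℝ, IsCoarse N ε L v →
      ∑ k ∈ Finset.Icc (-K + 1) K,
        hsz k * ((1 + oh k) * Up k * ((v (L k) - v (L (k - 1))) / hsz k)) = F v)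
    (a : ℝ) (ha : a = (1 / 2) * ∑ k ∈ Finset.Icc (-K + 1) K, hsz k * (oh k * Ubp k))
    (ρ : ℝ)
    (hρ : ρ = Real.sqrt (∑ k ∈ Finset.Icc (-K + 1) K, hsz k * (oh k * Ubp k - a) ^ 2)) :
    (1 / 2) * (1 + κ⁻¹) *
        Real.sqrt (∑ k ∈ Finset.Icc (-K + 1) K, hsz k * (Ubp k - Up k) ^ 2) ≤ ρ ∧
      ρ ≤ (1 / 2) * (1 + κ) *
        Real.sqrt (∑ k ∈ Finset.Icc (-K + 1) K, hsz k * (Ubp k - Up k) ^ 2) := by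
  classical
  set s : Finset ℤ := Finset.Icc (-K + 1) K with hsdef
  have hN0 : (0:ℝ) < (N:ℝ) := by exact_mod_cast (show (0:ℤ) < N by omega)
  have hεpos : 0 < ε := by rw [hε]; positivity
  have hκ0 : (0:ℝ) < κ := lt_of_lt_of_le one_pos hκ
  have hLlt : ∀ k : ℤ, L (k-1) < L k := fun k => hmono (by omega)
  have hszpos : ∀ k : ℤ, 0 < hsz k := by
    intro k
    rw [hhsz]
    have h1 : (1:ℝ) ≤ ((L k - L (k-1) : ℤ) : ℝ) := by
      exact_mod_cast (show (1:ℤ) ≤ L k - L (k-1) by have := hLlt k; omega)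
    nlinarith
  have hszne : ∀ k : ℤ, hsz k ≠ 0 := fun k => ne_of_gt (hszpos k)
  have hKle : -K ≤ K := by omega
  -- periodicity facts
  have hLK : L K = L (-K) + 2*N := by
    have := hLper (-K); rw [show -K + 2*K = K from by ring] at this; exact this
  have hszper : ∀ k : ℤ, hsz (k + 2*K) = hsz k := by
    intro k
    have hd : L (k + 2*K) - L (k + 2*K - 1) = L k - L (k-1) := by
      have h1 := hLper k
      have h2 := hLper (k-1)
      rw [show k + 2*K - 1 = (k - 1) + 2*K from by ring, h2]
      omega
    rw [hhsz, hhsz, hd]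
  have hohper : ∀ k : ℤ, oh (k + 2*K) = oh k := by
    intro k
    rw [hoh, hoh, show k + 2*K - 1 = (k-1) + 2*K from by ring,
      show k + 2*K + 1 = (k+1) + 2*K from by ring, hszper, hszper, hszper]
  have hUbpper : ∀ k : ℤ, Ubp (k + 2*K) = Ubp k := by
    intro k
    rw [hUbp, hUbp, show k + 2*K - 1 = (k-1) + 2*K from by ring, hLper, hLper, hszper,
      hub.1, hub.1]
  -- mesh regularity bounds on 1 + oh
  have hlo : ∀ k : ℤ, (1 + κ⁻¹)/2 ≤ 1 + oh k := by
    intro k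
    have h2 := (hreg k).2
    have h3 := (hreg (k+1)).1
    rw [show k + 1 - 1 = k from by ring] at h3
    have hk := hszpos k
    have e3 : κ⁻¹ * hsz k ≤ hsz (k-1) := by
      have h5 := mul_le_mul_of_nonneg_left h2 (le_of_lt (inv_pos.mpr hκ0))
      rw [← mul_assoc, inv_mul_cancel₀ (ne_of_gt hκ0), one_mul] at h5
      exact h5
    have key : (κ⁻¹ - 1)/2 ≤ (hsz (k-1) - 2*hsz k + hsz (k+1))/(4*hsz k) := by
      rw [div_le_div_iff₀ (by norm_num) (by positivity)]
      nlinarith [e3, h3]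
    rw [hoh]
    linarith [key]
  have hhi : ∀ k : ℤ, 1 + oh k ≤ (1 + κ)/2 := by
    intro k
    have h1 := (hreg k).1
    have h4 := (hreg (k+1)).2
    rw [show k + 1 - 1 = k from by ring] at h4
    have hk := hszpos k
    have e1 : hsz (k-1) ≤ κ * hsz k := by
      have h5 := mul_le_mul_of_nonneg_left h1 (le_of_lt hκ0)
      rw [← mul_assoc, mul_inv_cancel₀ (ne_of_gt hκ0), one_mul] at h5
      exact h5
    have key : (hsz (k-1) - 2*hsz k + hsz (k+1))/(4*hsz k) ≤ (κ - 1)/2 := by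
      rw [div_le_div_iff₀ (by positivity) (by norm_num)]
      nlinarith [e1, h4]
    rw [hoh]
    linarith [key]
  -- total length
  have hsum2 : ∑ k ∈ s, hsz k = 2 := by
    have ht := tele (fun j => ((L j : ℤ) : ℝ)) (-K) K hKle
    have hc : ∑ k ∈ s, hsz k
        = ε * ∑ k ∈ Finset.Icc (-K+1) K,
            ((fun j => ((L j : ℤ):ℝ)) k - (fun j => ((L j : ℤ):ℝ)) (k-1)) := by
      rw [Finset.mul_sum]
      refine Finset.sum_congr rfl fun k _ => ?_
      rw [hhsz]
      push_cast
      ring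
    rw [hc, ht]
    rw [hLK, hε]
    push_cast
    field_simp
    ring
  -- telescoping of the error gradient
  have hA : ∑ k ∈ s, hsz k * (Ubp k - Up k) = 0 := by
    have ht := tele (fun j => ub (L j) - u (L j)) (-K) K hKle
    have hc : ∑ k ∈ s, hsz k * (Ubp k - Up k)
        = ∑ k ∈ Finset.Icc (-K+1) K,
            ((fun j => ub (L j) - u (L j)) k - (fun j => ub (L j) - u (L j)) (k-1)) := by
      refine Finset.sum_congr rfl fun k _ => ?_
      dsimp only
      have hmd : ∀ x : ℝ, hsz k * (x / hsz k) = x := fun x => by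
        rw [mul_comm, div_mul_cancel₀ _ (hszne k)]
      rw [hUbp, hUp, mul_sub, hmd, hmd]
      ring
    rw [hc, ht]
    rw [hLK, hub.1 (L (-K)), hu.1 (L (-K))]
    ring
  -- Galerkin orthogonality tested with ub - u
  have hvd : IsCoarse N ε L (fun l => ub l - u l) := IsCoarse_sub N ε L ub u hub hu
  have hgrad_d : ∀ k : ℤ, ((fun l => ub l - u l) (L k) - (fun l => ub l - u l) (L (k-1))) / hsz k
      = Ubp k - Up k := by
    intro k
    dsimp only
    rw [hUbp, hUp]
    ring
  have hC : ∑ k ∈ s, hsz k * (Ubp k * (Ubp k - Up k))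
      = ∑ k ∈ s, hsz k * ((1 + oh k) * Up k * (Ubp k - Up k)) := by
    have h1 := hexact _ hvd
    have h2 := hqc _ hvd
    rw [← h2] at h1
    calc ∑ k ∈ s, hsz k * (Ubp k * (Ubp k - Up k))
        = ∑ k ∈ s, hsz k * (Ubp k *
            (((fun l => ub l - u l) (L k) - (fun l => ub l - u l) (L (k-1))) / hsz k)) :=
          Finset.sum_congr rfl fun k _ => by rw [hgrad_d k]
      _ = ∑ k ∈ s, hsz k * ((1 + oh k) * Up k *
            (((fun l => ub l - u l) (L k) - (fun l => ub l - u l) (L (k-1))) / hsz k)) := h1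
      _ = ∑ k ∈ s, hsz k * ((1 + oh k) * Up k * (Ubp k - Up k)) :=
          Finset.sum_congr rfl fun k _ => by rw [hgrad_d k]
  -- the residual function r and its antiderivative V
  set r : ℤ → ℝ := fun k => oh k * Ubp k - a with hrdef
  set g : ℤ → ℝ := fun k => hsz k * r k with hgdef
  have hrper : ∀ k : ℤ, r (k + 2*K) = r k := by
    intro k; simp only [hrdef]; rw [hohper, hUbpper]
  have hgper : ∀ k : ℤ, g (k + 2*K) = g k := by
    intro k; simp only [hgdef]; rw [hszper, hrper]
  have hB : ∑ k ∈ s, hsz k * r k = 0 := by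
    have hsplit : ∑ k ∈ s, hsz k * r k
        = (∑ k ∈ s, hsz k * (oh k * Ubp k)) - a * ∑ k ∈ s, hsz k := by
      rw [Finset.mul_sum, ← Finset.sum_sub_distrib]
      refine Finset.sum_congr rfl fun k _ => by simp only [hrdef]; ring
    rw [hsplit, hsum2, ha]
    ring
  have hgsum : ∑ k ∈ s, g k = 0 := by
    rw [← hB]
  set V : ℤ → ℝ := fun k => if 0 ≤ k then ∑ j ∈ Finset.Icc 1 k, g j
      else -∑ j ∈ Finset.Icc (k+1) 0, g j with hVdef
  have hVdiff : ∀ k : ℤ, V k - V (k-1) = g k := by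
    intro k
    simp only [hVdef]
    rcases lt_trichotomy k 0 with hk | hk | hk
    · rw [if_neg (by omega), if_neg (by omega), show k - 1 + 1 = k from by ring,
        sum_step_bot g k 0 (by omega)]
      ring
    · subst hk
      rw [if_pos le_rfl, if_neg (by omega), show (0:ℤ) - 1 + 1 = 0 from by ring,
        Finset.Icc_eq_empty (by omega : ¬(1:ℤ) ≤ 0), Finset.Icc_self, Finset.sum_singleton,
        Finset.sum_empty]
      ring
    · rw [if_pos (by omega), if_pos (by omega), sum_step_top g 1 k (by omega)]
      ring
  have hVstep : ∀ k : ℤ, (fun k => V (k + 2*K) - V k) (k+1) = (fun k => V (k + 2*K) - V k) k := by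
    intro k
    dsimp only
    have h1 := hVdiff (k + 1 + 2*K)
    have h2 := hVdiff (k + 1)
    rw [show k + 1 + 2*K - 1 = k + 2*K from by ring] at h1
    rw [show k + 1 - 1 = k from by ring] at h2
    have h3 := hgper (k+1)
    rw [show k + 1 + 2*K = (k+1) + 2*K from by ring] at h1
    linarith [h1, h2, h3]
  have hVK : V K - V (-K) = 0 := by
    have e1 : V K = ∑ j ∈ Finset.Icc 1 K, g j := by
      simp only [hVdef]; rw [if_pos (by omega)]
    have e2 : V (-K) = -∑ j ∈ Finset.Icc (-K+1) 0, g j := by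
      simp only [hVdef]; rw [if_neg (by omega)]
    have hsp := sum_split g (-K+1) 0 K (by omega) (by omega)
    rw [show (0:ℤ) + 1 = 1 from by norm_num] at hsp
    rw [e1, e2]
    have hgsum' : ∑ j ∈ Finset.Icc (-K+1) K, g j = 0 := hgsum
    linarith [hsp, hgsum']
  have hVper : ∀ k : ℤ, V (k + 2*K) = V k := by
    have hc := int_const (fun k => V (k + 2*K) - V k) hVstep
    intro k
    have h1 := hc k (-K)
    rw [show -K + 2*K = K from by ring] at h1
    linarith [h1, hVK]
  -- the bracketing index function
  have hbd := smono_bounds L hmono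
  have hex : ∀ l : ℤ, ∃ k : ℤ, L k ≤ l ∧ l < L (k+1) := by
    intro l
    have Hinh : ∃ z : ℤ, l < L z := by
      rcases le_total l 0 with h | h
      · exact ⟨1, by have := (hbd 1).1 (by omega); omega⟩
      · exact ⟨l+1, by have := (hbd (l+1)).1 (by omega); omega⟩
    have Hbdd : ∃ b : ℤ, ∀ z : ℤ, l < L z → b ≤ z := by
      refine ⟨min 0 (l+1), fun z hz => ?_⟩
      rcases le_total z 0 with h | h
      · have := (hbd z).2 h; omega
      · omega
    obtain ⟨k0, hk0, hleast⟩ := Int.exists_least_of_bdd Hbdd Hinh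
    refine ⟨k0 - 1, ?_, ?_⟩
    · by_contra hcon
      push_neg at hcon
      have := hleast _ hcon
      omega
    · rw [show k0 - 1 + 1 = k0 from by ring]; exact hk0
  choose c hc1 hc2 using hex
  have hcu : ∀ l k : ℤ, L k ≤ l → l < L (k+1) → c l = k := by
    intro l k h1 h2
    by_contra hne
    rcases lt_or_gt_of_ne hne with hlt | hgt
    · have hle : c l + 1 ≤ k := by omega
      have h3 : L (c l + 1) ≤ L k := hmono.le_iff_le.mpr hle
      have h4 := hc2 l
      omega
    · have hle : k + 1 ≤ c l := by omega
      have h3 : L (k+1) ≤ L (c l) := hmono.le_iff_le.mpr hle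
      have h4 := hc1 l
      omega
  have hcnode : ∀ k : ℤ, c (L k) = k := fun k => hcu (L k) k le_rfl (hmono (by omega))
  -- the test function v with gradient r
  set v : ℤ → ℝ := fun l => V (c l) + ε * ((l - L (c l) : ℤ) : ℝ) * r (c l + 1) with hvdef
  have hvnode : ∀ k : ℤ, v (L k) = V k := by
    intro k
    simp only [hvdef, hcnode k]
    simp
  have hV0 : V 0 = 0 := by
    simp only [hVdef]
    rw [if_pos le_rfl, Finset.Icc_eq_empty (by omega : ¬(1:ℤ) ≤ 0), Finset.sum_empty]
  have hvc : IsCoarse N ε L v := by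
    refine ⟨?_, ?_, ?_⟩
    · intro l
      have hcl : c (l + 2*N) = c l + 2*K := by
        apply hcu
        · rw [hLper]
          have := hc1 l; omega
        · rw [show c l + 2*K + 1 = (c l + 1) + 2*K from by ring, hLper]
          have := hc2 l; omega
      simp only [hvdef]
      rw [hcl, hVper, show c l + 2*K + 1 = (c l + 1) + 2*K from by ring, hrper, hLper]
      push_cast
      ring
    · have h01 : (0:ℤ) < L (0+1) := by
        rw [show (0:ℤ)+1 = 1 from by norm_num]
        have := (hbd 1).1 (by omega); omega
      have h0 : c 0 = 0 := hcu 0 0 (by omega) h01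
      simp only [hvdef]
      rw [h0, hL0, hV0]
      simp
    · intro k l h1 h2
      have hquot : (v (L k) - v (L (k-1))) / (ε * ((L k - L (k-1) : ℤ) : ℝ)) = r k := by
        rw [hvnode k, hvnode (k-1), hVdiff k, ← hhsz]
        simp only [hgdef]
        rw [mul_div_cancel_left₀ _ (hszne k)]
      rw [hquot, hvnode (k-1)]
      rcases eq_or_lt_of_le h2 with heq | hlt
      · rw [heq, hvnode k, ← hhsz k]
        have hd := hVdiff k
        simp only [hgdef] at hd
        linarith [hd]
      · have hcl : c l = k - 1 :=
          hcu l (k-1) h1 (by rw [show k - 1 + 1 = k from by ring]; exact hlt)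
        simp only [hvdef]
        rw [hcl, show k - 1 + 1 = k from by ring]
  have hgradv : ∀ k : ℤ, (v (L k) - v (L (k-1))) / hsz k = r k := by
    intro k
    rw [hvnode k, hvnode (k-1), hVdiff k]
    simp only [hgdef]
    rw [mul_div_cancel_left₀ _ (hszne k)]
  have hD : ∑ k ∈ s, hsz k * (Ubp k * r k) = ∑ k ∈ s, hsz k * ((1 + oh k) * Up k * r k) := by
    have h1 := hexact v hvc
    have h2 := hqc v hvc
    rw [← h2] at h1
    calc ∑ k ∈ s, hsz k * (Ubp k * r k)
        = ∑ k ∈ s, hsz k * (Ubp k * ((v (L k) - v (L (k-1))) / hsz k)) :=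
          Finset.sum_congr rfl fun k _ => by rw [hgradv k]
      _ = ∑ k ∈ s, hsz k * ((1 + oh k) * Up k * ((v (L k) - v (L (k-1))) / hsz k)) := h1
      _ = ∑ k ∈ s, hsz k * ((1 + oh k) * Up k * r k) :=
          Finset.sum_congr rfl fun k _ => by rw [hgradv k]
  -- final algebra
  have hSqnn : 0 ≤ ∑ k ∈ s, hsz k * (Ubp k - Up k)^2 :=
    Finset.sum_nonneg fun k _ => mul_nonneg (le_of_lt (hszpos k)) (sq_nonneg _)
  have hRqnn : 0 ≤ ∑ k ∈ s, hsz k * (oh k * Ubp k - a)^2 :=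
    Finset.sum_nonneg fun k _ => mul_nonneg (le_of_lt (hszpos k)) (sq_nonneg _)
  have hRqr : ∑ k ∈ s, hsz k * (oh k * Ubp k - a)^2 = ∑ k ∈ s, hsz k * (r k)^2 :=
    Finset.sum_congr rfl fun k _ => by simp only [hrdef]
  have key1 : ∑ k ∈ s, hsz k * (r k * (Ubp k - Up k))
      = ∑ k ∈ s, hsz k * ((1 + oh k) * (Ubp k - Up k)^2) := by
    have expand : ∀ k ∈ s, hsz k * (r k * (Ubp k - Up k)) =
        hsz k * ((1 + oh k) * (Ubp k - Up k)^2)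
        - hsz k * (Ubp k * (Ubp k - Up k))
        + hsz k * ((1 + oh k) * Up k * (Ubp k - Up k))
        - a * (hsz k * (Ubp k - Up k)) := by
      intro k _
      simp only [hrdef]
      ring
    rw [Finset.sum_congr rfl expand, Finset.sum_sub_distrib, Finset.sum_add_distrib,
      Finset.sum_sub_distrib, ← Finset.mul_sum, hA, hC]
    ring
  have key2 : ∑ k ∈ s, hsz k * (r k)^2
      = ∑ k ∈ s, hsz k * (r k * ((1 + oh k) * (Ubp k - Up k))) := by
    have expand : ∀ k ∈ s, hsz k * (r k)^2 =
        hsz k * (r k * ((1 + oh k) * (Ubp k - Up k)))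
        - hsz k * (Ubp k * r k)
        + hsz k * ((1 + oh k) * Up k * r k)
        - a * (hsz k * r k) := by
      intro k _
      simp only [hrdef]
      ring
    rw [Finset.sum_congr rfl expand, Finset.sum_sub_distrib, Finset.sum_add_distrib,
      Finset.sum_sub_distrib, ← Finset.mul_sum, hB, hD]
    ring
  have cs1 := cs_sum s hsz r (fun k => Ubp k - Up k) (fun k _ => le_of_lt (hszpos k))
  have cs2 := cs_sum s hsz r (fun k => (1 + oh k) * (Ubp k - Up k))
    (fun k _ => le_of_lt (hszpos k))
  constructor
  · -- lower bound
    rw [hρ]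
    have low1 : (1 + κ⁻¹)/2 * (∑ k ∈ s, hsz k * (Ubp k - Up k)^2)
        ≤ ∑ k ∈ s, hsz k * ((1 + oh k) * (Ubp k - Up k)^2) := by
      rw [Finset.mul_sum]
      refine Finset.sum_le_sum fun k _ => ?_
      have h1 := hlo k
      have h2 := hszpos k
      nlinarith [mul_nonneg (le_of_lt h2) (sq_nonneg (Ubp k - Up k))]
    have hchain : (1 + κ⁻¹)/2 * (∑ k ∈ s, hsz k * (Ubp k - Up k)^2)
        ≤ Real.sqrt (∑ k ∈ s, hsz k * (oh k * Ubp k - a)^2)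
          * Real.sqrt (∑ k ∈ s, hsz k * (Ubp k - Up k)^2) := by
      calc (1 + κ⁻¹)/2 * (∑ k ∈ s, hsz k * (Ubp k - Up k)^2)
          ≤ ∑ k ∈ s, hsz k * ((1 + oh k) * (Ubp k - Up k)^2) := low1
        _ = ∑ k ∈ s, hsz k * (r k * (Ubp k - Up k)) := key1.symm
        _ ≤ Real.sqrt (∑ k ∈ s, hsz k * (r k)^2)
            * Real.sqrt (∑ k ∈ s, hsz k * (Ubp k - Up k)^2) := cs1
        _ = Real.sqrt (∑ k ∈ s, hsz k * (oh k * Ubp k - a)^2)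
            * Real.sqrt (∑ k ∈ s, hsz k * (Ubp k - Up k)^2) := by rw [hRqr]
    set B := Real.sqrt (∑ k ∈ s, hsz k * (Ubp k - Up k)^2) with hBdef
    set A := Real.sqrt (∑ k ∈ s, hsz k * (oh k * Ubp k - a)^2) with hAdef
    have ht0 : 0 ≤ B := by rw [hBdef]; exact Real.sqrt_nonneg _
    have hρ0 : 0 ≤ A := by rw [hAdef]; exact Real.sqrt_nonneg _
    have ht2 : B^2 = ∑ k ∈ s, hsz k * (Ubp k - Up k)^2 := by
      rw [hBdef]; exact Real.sq_sqrt hSqnn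
    rw [← ht2] at hchain
    clear_value A B
    rcases eq_or_lt_of_le ht0 with h0 | h0
    · rw [← h0]
      simpa using hρ0
    · nlinarith [hchain, h0, hρ0]
  · -- upper bound
    rw [hρ]
    have hκ1 : (0:ℝ) < 1 + κ := by linarith
    have up1 : ∑ k ∈ s, hsz k * ((1 + oh k) * (Ubp k - Up k))^2
        ≤ ((1+κ)/2)^2 * ∑ k ∈ s, hsz k * (Ubp k - Up k)^2 := by
      rw [Finset.mul_sum]
      refine Finset.sum_le_sum fun k _ => ?_
      have h1 := hlo k
      have h2 := hhi k
      have h3 := hszpos k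
      have hpos : (0:ℝ) < 1 + κ⁻¹ := by positivity
      have hsq : (1 + oh k)^2 ≤ ((1+κ)/2)^2 := by nlinarith [h1, h2, hpos]
      nlinarith [mul_nonneg (le_of_lt h3) (sq_nonneg (Ubp k - Up k)), hsq]
    have e2 : Real.sqrt (∑ k ∈ s, hsz k * ((1 + oh k) * (Ubp k - Up k))^2)
        ≤ (1+κ)/2 * Real.sqrt (∑ k ∈ s, hsz k * (Ubp k - Up k)^2) := by
      have h5 := Real.sqrt_le_sqrt up1
      rw [Real.sqrt_mul (by positivity) _, Real.sqrt_sq (by positivity)] at h5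
      exact h5
    have hchain2 : ∑ k ∈ s, hsz k * (r k)^2
        ≤ Real.sqrt (∑ k ∈ s, hsz k * (r k)^2)
          * ((1+κ)/2 * Real.sqrt (∑ k ∈ s, hsz k * (Ubp k - Up k)^2)) := by
      calc ∑ k ∈ s, hsz k * (r k)^2
          = ∑ k ∈ s, hsz k * (r k * ((1 + oh k) * (Ubp k - Up k))) := key2
        _ ≤ Real.sqrt (∑ k ∈ s, hsz k * (r k)^2)
            * Real.sqrt (∑ k ∈ s, hsz k * ((1 + oh k) * (Ubp k - Up k))^2) := cs2
        _ ≤ Real.sqrt (∑ k ∈ s, hsz k * (r k)^2)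
            * ((1+κ)/2 * Real.sqrt (∑ k ∈ s, hsz k * (Ubp k - Up k)^2)) :=
            mul_le_mul_of_nonneg_left e2 (Real.sqrt_nonneg _)
    rw [hRqr]
    set B := Real.sqrt (∑ k ∈ s, hsz k * (Ubp k - Up k)^2) with hBdef
    set Q := Real.sqrt (∑ k ∈ s, hsz k * (r k)^2) with hQdef
    have hq0 : 0 ≤ Q := by rw [hQdef]; exact Real.sqrt_nonneg _
    have hs0 : 0 ≤ B := by rw [hBdef]; exact Real.sqrt_nonneg _
    have hq2 : Q^2 = ∑ k ∈ s, hsz k * (r k)^2 := by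
      rw [hQdef]; exact Real.sq_sqrt (by rw [← hRqr]; exact hRqnn)
    rw [← hq2] at hchain2
    clear_value Q B
    rcases eq_or_lt_of_le hq0 with h0 | h0
    · rw [← h0]
      nlinarith [hs0, hκ1]
    · nlinarith [hchain2, h0, hs0]
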